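/- If f and g are monotone C³ functions on [0,∞) with nonvanishing derivatives such that 1/√|f'| and 1/√|g'| are convex, then 1/√|(f∘g)'| is convex (where f∘g is defined, i.e. g maps into the domain of f). -/

import Mathlib

open Set Filter Topology


lemma aux_deriv_nonneg {φ : ℝ → ℝ} {d y : ℝ} (hy : 0 < y)
    (hmono : ∀ a ∈ Ioi (0:ℝ), ∀ b ∈ Ioi (0:ℝ), a ≤ b → φ a ≤ φ b)
    (hd : HasDerivAt φ d y) : 0 ≤ d := by
  have h1 : Tendsto (slope φ y) (𝓝[>] y) (𝓝 d) :=
    (hasDerivAt_iff_tendsto_slope.1 hd).mono_left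
      (nhdsWithin_mono _ (fun z hz => ne_of_gt hz))
  refine ge_of_tendsto h1 ?_
  filter_upwards [self_mem_nhdsWithin] with z hz
  have hzy : y < z := hz
  rw [slope_def_field]
  exact div_nonneg (sub_nonneg.2 (hmono y hy z (hy.trans hzy) hzy.le))
    (sub_nonneg.2 hzy.le)

lemma aux_sign {φ : ℝ → ℝ} (hc : ContinuousOn φ (Ici 0))
    (hne : ∀ x ∈ Ici (0:ℝ), φ x ≠ 0) :
    ∃ ε : ℝ, (ε = 1 ∨ ε = -1) ∧ ∀ x ∈ Ici (0:ℝ), 0 < ε * φ x := by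
  rcases lt_or_gt_of_ne (hne 0 (le_refl (0:ℝ))) with h0 | h0
  · refine ⟨-1, Or.inr rfl, fun x hx => ?_⟩
    rcases lt_or_gt_of_ne (hne x hx) with hx0 | hx0
    · nlinarith
    · exfalso
      have hsub := intermediate_value_Icc (hx : (0:ℝ) ≤ x) (hc.mono Icc_subset_Ici_self)
      obtain ⟨c, hc1, hc2⟩ := hsub ⟨h0.le, hx0.le⟩
      exact hne c hc1.1 hc2
  · refine ⟨1, Or.inl rfl, fun x hx => ?_⟩
    rcases lt_or_gt_of_ne (hne x hx) with hx0 | hx0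
    · exfalso
      have hsub := intermediate_value_Icc' (hx : (0:ℝ) ≤ x) (hc.mono Icc_subset_Ici_self)
      obtain ⟨c, hc1, hc2⟩ := hsub ⟨hx0.le, h0.le⟩
      exact hne c hc1.1 hc2
    · nlinarith

/-- Package: from a C² function `p` of constant sign `ε` with `1/√|p|` convex on `Ici 0`,
the smooth surrogate `u = 1/√(ε p)` is C², positive, equals `1/√|p|` on `Ici 0`, and has
nonnegative second derivative on `Ioi 0`. -/
lemma aux_pack {p : ℝ → ℝ} {ε : ℝ} (hε : ε = 1 ∨ ε = -1)
    (hp : ContDiffOn ℝ 2 p (Ici 0))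
    (hpos : ∀ x ∈ Ici (0:ℝ), 0 < ε * p x)
    (hconv : ConvexOn ℝ (Ici 0) (fun x => 1 / Real.sqrt |p x|)) :
    (∀ x ∈ Ici (0:ℝ), |p x| = ε * p x) ∧
    ContDiffOn ℝ 2 (fun x => 1 / Real.sqrt (ε * p x)) (Ici 0) ∧
    (∀ x ∈ Ici (0:ℝ), 0 < 1 / Real.sqrt (ε * p x)) ∧
    (∀ x ∈ Ioi (0:ℝ), 0 ≤ deriv (deriv (fun x => 1 / Real.sqrt (ε * p x))) x) := by
  set u : ℝ → ℝ := fun x => 1 / Real.sqrt (ε * p x) with hu_def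
  have habs : ∀ x ∈ Ici (0:ℝ), |p x| = ε * p x := by
    intro x hx
    rcases hε with rfl | rfl
    · rw [one_mul]; exact abs_of_pos (by simpa using hpos x hx)
    · have := hpos x hx
      have hneg : p x < 0 := by nlinarith
      rw [abs_of_neg hneg]; ring
  have hcd : ContDiffOn ℝ 2 u (Ici 0) := by
    have h1 : ContDiffOn ℝ 2 (fun x => ε * p x) (Ici 0) := contDiffOn_const.mul hp
    have h2 := (h1.sqrt (fun x hx => (hpos x hx).ne')).inv
      (fun x hx => (Real.sqrt_pos.2 (hpos x hx)).ne')
    have h3 : ContDiffOn ℝ 2 (fun x => (Real.sqrt (ε * p x))⁻¹) (Ici 0) := h2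
    simpa [hu_def, one_div] using h3
  have hupos : ∀ x ∈ Ici (0:ℝ), 0 < u x := fun x hx =>
    one_div_pos.2 (Real.sqrt_pos.2 (hpos x hx))
  refine ⟨habs, hcd, hupos, ?_⟩
  have huc : ConvexOn ℝ (Ici 0) u :=
    hconv.congr (fun x hx => by simp only [hu_def, habs x hx])
  have humono : MonotoneOn (derivWithin u (Ici 0)) (Ici 0) :=
    huc.monotoneOn_derivWithin (hcd.differentiableOn (by norm_num))
  intro y hy
  have hyo : (0:ℝ) < y := hy
  have hmono' : ∀ a ∈ Ioi (0:ℝ), ∀ b ∈ Ioi (0:ℝ), a ≤ b → deriv u a ≤ deriv u b := by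
    intro a ha b hb hab
    rw [← derivWithin_of_mem_nhds (Ici_mem_nhds ha), ← derivWithin_of_mem_nhds (Ici_mem_nhds hb)]
    exact humono (Set.mem_Ici.2 (le_of_lt ha)) (Set.mem_Ici.2 (le_of_lt hb)) hab
  have huo : ContDiffOn ℝ 1 (deriv u) (Ioi 0) :=
    (hcd.mono Ioi_subset_Ici_self).deriv_of_isOpen isOpen_Ioi (by norm_num)
  have hd : HasDerivAt (deriv u) (deriv (deriv u) y) y :=
    ((huo.differentiableOn one_ne_zero).differentiableAt (isOpen_Ioi.mem_nhds hyo)).hasDerivAt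
  exact aux_deriv_nonneg hyo hmono' hd

/-- A monotone-or-antitone map of `[0,∞)` into itself with nonvanishing derivative is
positive on `(0,∞)`. -/
lemma aux_gpos {g : ℝ → ℝ} (hgmap : ∀ x ∈ Ici (0:ℝ), g x ∈ Ici (0:ℝ))
    (hgmono : MonotoneOn g (Ici 0) ∨ AntitoneOn g (Ici 0))
    (hg' : ∀ x ∈ Ici (0:ℝ), derivWithin g (Ici 0) x ≠ 0) :
    ∀ x ∈ Ioi (0:ℝ), 0 < g x := by
  intro x hx
  have hx0 : (0:ℝ) < x := hx
  rcases (Set.mem_Ici.1 (hgmap x hx0.le)).lt_or_eq with h | h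
  · exact h
  exfalso
  rcases hgmono with hm | ha
  · have hall : ∀ y ∈ Icc (0:ℝ) x, g y = 0 := fun y hy =>
      le_antisymm (by rw [h]; exact hm hy.1 hx0.le hy.2) (hgmap y hy.1)
    have hm2 : Icc (0:ℝ) x ∈ 𝓝 (x/2) := Icc_mem_nhds (by linarith) (by linarith)
    have heq : g =ᶠ[𝓝 (x/2)] (fun _ => (0:ℝ)) := eventually_of_mem hm2 (fun y hy => hall y hy)
    have key : derivWithin g (Ici 0) (x/2) = 0 := by
      rw [derivWithin_of_mem_nhds (Ici_mem_nhds (by linarith : (0:ℝ) < x/2)),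
        heq.deriv_eq, deriv_const]
    exact hg' (x/2) (by linarith : (0:ℝ) ≤ x/2) key
  · have hall : ∀ y ∈ Ici x, g y = 0 := fun y hy =>
      le_antisymm (by rw [h]; exact ha hx0.le (hx0.le.trans hy) hy)
        (hgmap y (hx0.le.trans hy))
    have hm2 : Ici x ∈ 𝓝 (x+1) := Ici_mem_nhds (by linarith)
    have heq : g =ᶠ[𝓝 (x+1)] (fun _ => (0:ℝ)) := eventually_of_mem hm2 (fun y hy => hall y hy)
    have key : derivWithin g (Ici 0) (x+1) = 0 := by
      rw [derivWithin_of_mem_nhds (Ici_mem_nhds (by linarith : (0:ℝ) < x+1)),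
        heq.deriv_eq, deriv_const]
    exact hg' (x+1) (by linarith : (0:ℝ) ≤ x+1) key

/-- If `f, g` are monotone C³ functions on `[0,∞)` with nonvanishing derivatives
(mapping `[0,∞)` into itself, so the composition is defined) such that
`1/√|f'|` and `1/√|g'|` are convex, then `1/√|(f∘g)'|` is convex. -/
theorem gammaHalfConvex_comp (f g : ℝ → ℝ)
    (hf : ContDiffOn ℝ 3 f (Ici 0)) (hg : ContDiffOn ℝ 3 g (Ici 0))
    (hfmap : ∀ x ∈ Ici (0:ℝ), f x ∈ Ici (0:ℝ))
    (hgmap : ∀ x ∈ Ici (0:ℝ), g x ∈ Ici (0:ℝ))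
    (hfmono : MonotoneOn f (Ici 0) ∨ AntitoneOn f (Ici 0))
    (hgmono : MonotoneOn g (Ici 0) ∨ AntitoneOn g (Ici 0))
    (hf' : ∀ x ∈ Ici (0:ℝ), derivWithin f (Ici 0) x ≠ 0)
    (hg' : ∀ x ∈ Ici (0:ℝ), derivWithin g (Ici 0) x ≠ 0)
    (hfc : ConvexOn ℝ (Ici 0) (fun x => 1 / Real.sqrt |derivWithin f (Ici 0) x|))
    (hgc : ConvexOn ℝ (Ici 0) (fun x => 1 / Real.sqrt |derivWithin g (Ici 0) x|)) :
    ConvexOn ℝ (Ici 0) (fun x => 1 / Real.sqrt |derivWithin (f ∘ g) (Ici 0) x|) := by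
  have uD : UniqueDiffOn ℝ (Ici (0:ℝ)) := uniqueDiffOn_Ici 0
  set p := derivWithin f (Ici (0:ℝ)) with hp_def
  set q := derivWithin g (Ici (0:ℝ)) with hq_def
  have hp2 : ContDiffOn ℝ 2 p (Ici 0) := hf.derivWithin uD (by norm_num)
  have hq2 : ContDiffOn ℝ 2 q (Ici 0) := hg.derivWithin uD (by norm_num)
  obtain ⟨ef, hef, hefp⟩ := aux_sign hp2.continuousOn hf'
  obtain ⟨eg, heg, hegq⟩ := aux_sign hq2.continuousOn hg'
  obtain ⟨habsp, hu_cd, hu_pos, hu2⟩ := aux_pack hef hp2 hefp hfc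
  obtain ⟨habsq, hv_cd, hv_pos, hv2⟩ := aux_pack heg hq2 hegq hgc
  set u : ℝ → ℝ := fun y => 1 / Real.sqrt (ef * p y) with hu_def
  set v : ℝ → ℝ := fun z => 1 / Real.sqrt (eg * q z) with hv_def
  have hgpos : ∀ x ∈ Ioi (0:ℝ), 0 < g x := aux_gpos hgmap hgmono hg'
  have hfd : DifferentiableOn ℝ f (Ici 0) := hf.differentiableOn (by norm_num)
  have hgd : DifferentiableOn ℝ g (Ici 0) := hg.differentiableOn (by norm_num)
  have hgmapsto : Set.MapsTo g (Ici 0) (Ici 0) := fun y hy => hgmap y hy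
  have hcomp : ∀ x ∈ Ici (0:ℝ), derivWithin (f ∘ g) (Ici 0) x = p (g x) * q x := by
    intro x hx
    rw [hp_def, hq_def]
    exact derivWithin_comp x (hfd (g x) (hgmap x hx)) (hgd x hx) hgmapsto
  set U : ℝ → ℝ := fun x => u (g x) * v x with hU_def
  have hWU : ∀ x ∈ Ici (0:ℝ), U x = 1 / Real.sqrt |derivWithin (f ∘ g) (Ici 0) x| := by
    intro x hx
    rw [hcomp x hx, abs_mul, habsp (g x) (hgmap x hx), habsq x hx,
      Real.sqrt_mul (hefp (g x) (hgmap x hx)).le, hU_def]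
    simp only [hu_def, hv_def]
    rw [div_mul_div_comm, one_mul]
  suffices hconv : ConvexOn ℝ (Ici 0) U by exact hconv.congr (fun x hx => hWU x hx)
  have hgmap' : Set.MapsTo g (Ici 0) (Ici 0) := fun y hy => hgmap y hy
  have hU_cd : ContDiffOn ℝ 2 U (Ici 0) :=
    (hu_cd.comp (hg.of_le (by norm_num)) hgmap').mul hv_cd
  apply convexOn_of_deriv2_nonneg (convex_Ici 0) hU_cd.continuousOn
  · rw [interior_Ici]
    exact (hU_cd.mono Ioi_subset_Ici_self).differentiableOn (by norm_num)
  · rw [interior_Ici]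
    exact ((hU_cd.mono Ioi_subset_Ici_self).deriv_of_isOpen isOpen_Ioi (by norm_num)).differentiableOn one_ne_zero
  rw [interior_Ici]
  intro x hx
  have hx0 : (0:ℝ) < x := hx
  have hgx : 0 < g x := hgpos x hx
  -- pointwise derivative facts
  have hq_at : ∀ z ∈ Ioi (0:ℝ), HasDerivAt g (q z) z := by
    intro z hz
    have hdz : DifferentiableAt ℝ g z :=
      (hg.contDiffAt (Ici_mem_nhds hz)).differentiableAt (by norm_num)
    have h := hdz.hasDerivAt
    rwa [hq_def, derivWithin_of_mem_nhds (Ici_mem_nhds hz)]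
  have hu_at : ∀ y ∈ Ioi (0:ℝ), HasDerivAt u (deriv u y) y := fun y hy =>
    ((hu_cd.contDiffAt (Ici_mem_nhds hy)).differentiableAt (by norm_num)).hasDerivAt
  have hv_at : ∀ z ∈ Ioi (0:ℝ), HasDerivAt v (deriv v z) z := fun z hz =>
    ((hv_cd.contDiffAt (Ici_mem_nhds hz)).differentiableAt (by norm_num)).hasDerivAt
  set U1 : ℝ → ℝ := fun z => deriv u (g z) * q z * v z + u (g z) * deriv v z with hU1_def
  have hU1_at : ∀ z ∈ Ioi (0:ℝ), HasDerivAt U (U1 z) z := by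
    intro z hz
    have h1 : HasDerivAt (fun t => u (g t)) (deriv u (g z) * q z) z :=
      (hu_at (g z) (hgpos z hz)).comp z (hq_at z hz)
    exact h1.mul (hv_at z hz)
  have hderiv_eq : deriv U =ᶠ[𝓝 x] U1 :=
    eventually_of_mem (isOpen_Ioi.mem_nhds hx) (fun z hz => (hU1_at z hz).deriv)
  -- second derivative objects
  have hu'_at : HasDerivAt (deriv u) (deriv (deriv u) (g x)) (g x) :=
    ((((hu_cd.mono Ioi_subset_Ici_self).deriv_of_isOpen isOpen_Ioi (by norm_num)).differentiableOn
      one_ne_zero).differentiableAt (isOpen_Ioi.mem_nhds hgx)).hasDerivAt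
  have hv'_at : HasDerivAt (deriv v) (deriv (deriv v) x) x :=
    ((((hv_cd.mono Ioi_subset_Ici_self).deriv_of_isOpen isOpen_Ioi (by norm_num)).differentiableOn
      one_ne_zero).differentiableAt (isOpen_Ioi.mem_nhds hx)).hasDerivAt
  have hq'_at : HasDerivAt q (deriv q x) x :=
    ((hq2.contDiffAt (Ici_mem_nhds hx)).differentiableAt (by norm_num)).hasDerivAt
  have hT1 : HasDerivAt (fun z => deriv u (g z)) (deriv (deriv u) (g x) * q x) x :=
    hu'_at.comp x (hq_at x hx)
  have hT2 := (hT1.mul hq'_at).mul (hv_at x hx)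
  have hT3 := ((hu_at (g x) hgx).comp x (hq_at x hx)).mul hv'_at
  have hT4 := hT2.add hT3
  -- relation between q and v
  have hB : 0 < v x := hv_pos x hx0.le
  have hA : 0 < u (g x) := hu_pos (g x) hgx.le
  have heg2 : eg * eg = 1 := by rcases heg with rfl | rfl <;> norm_num
  have hqv : ∀ z ∈ Ici (0:ℝ), q z = eg / (v z) ^ 2 := by
    intro z hz
    have h1 : 0 < eg * q z := hegq z hz
    have hs : Real.sqrt (eg * q z) ^ 2 = eg * q z := Real.sq_sqrt h1.le
    simp only [hv_def]
    rw [div_pow, one_pow, hs, div_div_eq_mul_div, div_one, ← mul_assoc, heg2, one_mul]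
  have hq_ev : q =ᶠ[𝓝 x] fun z => eg / (v z) ^ 2 :=
    eventually_of_mem (isOpen_Ioi.mem_nhds hx) (fun z hz => hqv z (Set.mem_Ici.2 (le_of_lt hz)))
  have hvpow : HasDerivAt (fun z => (v z) ^ 2) ((2:ℕ) * v x ^ 1 * deriv v x) x := (hv_at x hx).pow 2
  have hdiv : HasDerivAt (fun z => eg / (v z) ^ 2)
      ((0 * v x ^ 2 - eg * ((2:ℕ) * v x ^ 1 * deriv v x)) / (v x ^ 2) ^ 2) x :=
    (hasDerivAt_const x eg).div hvpow (pow_ne_zero 2 hB.ne')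
  have hQ'clean : deriv q x = -2 * eg * deriv v x / v x ^ 3 := by
    rw [hq_ev.deriv_eq, hdiv.deriv]
    field_simp
    ring
  have hQclean : q x = eg / v x ^ 2 := hqv x hx0.le
  have hT4' : HasDerivAt U1
      ((deriv (deriv u) (g x) * q x * q x + deriv u (g x) * deriv q x) * v x
        + deriv u (g x) * q x * deriv v x
        + (deriv u (g x) * q x * deriv v x + u (g x) * deriv (deriv v) x)) x := hT4
  have hval : deriv^[2] U x
      = (deriv (deriv u) (g x) * q x * q x + deriv u (g x) * deriv q x) * v x
        + deriv u (g x) * q x * deriv v x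
        + (deriv u (g x) * q x * deriv v x + u (g x) * deriv (deriv v) x) := by
    rw [show deriv^[2] U x = deriv (deriv U) x from rfl, hderiv_eq.deriv_eq, hT4'.deriv]
  rw [hval]
  have hcancel : (deriv (deriv u) (g x) * q x * q x + deriv u (g x) * deriv q x) * v x
        + deriv u (g x) * q x * deriv v x
        + (deriv u (g x) * q x * deriv v x + u (g x) * deriv (deriv v) x)
      = deriv (deriv u) (g x) * (q x * q x) * v x + u (g x) * deriv (deriv v) x := by
    rw [hQ'clean, hQclean]
    field_simp
    ring
  rw [hcancel]
  have h1 : 0 ≤ deriv (deriv u) (g x) := hu2 (g x) hgx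
  have h2 : 0 ≤ deriv (deriv v) x := hv2 x hx
  have := mul_self_nonneg (q x)
  nlinarith [hA.le, hB.le, mul_nonneg (mul_nonneg h1 (mul_self_nonneg (q x))) hB.le, mul_nonneg hA.le h2]
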